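/- Let G be a directed graph on vertices {0,...,n-1}. For a fixed source vertex s and any vertex v reachable from s, define maxId(v) as the minimum, over all directed paths P from s to v whose intermediate vertices are all strictly less than s, of the maximum intermediate-vertex label on P (with maxId(v) = 0 for direct neighbors of s, i.e., paths with no intermediate vertices). Then there is a fill-path from s to v (all intermediate vertices less than both s and v) if and only if v is a neighbor-or-descendant in this restricted reachability and maxId(v) < v, or v is a direct out-neighbor of s. -/

import Mathlib

/-- `IsPath G a l b` : directed path from `a` to `b` with intermediate vertices `l`. -/
def IsPath (G : ℕ → ℕ → Prop) : ℕ → List ℕ → ℕ → Prop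
  | a, [], b => G a b
  | a, x :: xs, b => G a x ∧ IsPath G x xs b

/-- A fill-path from `i` to `j`: all intermediate vertices are `< min i j`. -/
def FillPath (G : ℕ → ℕ → Prop) (i j : ℕ) : Prop :=
  ∃ l, IsPath G i l j ∧ ∀ v ∈ l, v < i ∧ v < j

/-- `maxId G s v` : the minimum, over all admissible paths from `s` to `v`
(paths all of whose intermediate vertices are `< s`), of the maximum
intermediate-vertex label on the path (`0` when there are no intermediates);
`⊤` if `v` is not reachable by an admissible path. -/
noncomputable def maxId (G : ℕ → ℕ → Prop) (s v : ℕ) : ℕ∞ :=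
  sInf {m : ℕ∞ | ∃ l, IsPath G s l v ∧ (∀ x ∈ l, x < s) ∧ m = (l.foldr max 0 : ℕ)}

lemma le_foldr_max (l : List ℕ) : ∀ x ∈ l, x ≤ l.foldr max 0 := by
  induction l with
  | nil => simp
  | cons a t ih =>
    intro x hx
    rcases List.mem_cons.mp hx with h | h
    · subst h; exact le_max_left _ _
    · exact le_trans (ih x h) (le_max_right _ _)

lemma foldr_max_lt (l : List ℕ) (v : ℕ) (hv : 0 < v) (h : ∀ x ∈ l, x < v) :
    l.foldr max 0 < v := by
  induction l with
  | nil => simpa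
  | cons a t ih =>
    exact max_lt (h a (List.mem_cons_self)) (ih fun x hx => h x (List.mem_cons_of_mem _ hx))

/-- There is a fill-path from `s` to `v` iff `v` is a direct out-neighbor of `s`,
or `v` is reachable from `s` by an admissible path and `maxId G s v < v`. -/
theorem fillpath_iff_maxId_lt
    (G : ℕ → ℕ → Prop) (s v : ℕ) :
    FillPath G s v ↔
      (G s v ∨
        ((∃ l, IsPath G s l v ∧ ∀ x ∈ l, x < s) ∧ maxId G s v < (v : ℕ∞))) := by
  constructor
  · rintro ⟨l, hl, hlt⟩
    cases l with
    | nil => exact Or.inl hl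
    | cons a t =>
      right
      refine ⟨⟨a :: t, hl, fun x hx => (hlt x hx).1⟩, ?_⟩
      have hmem : ((((a :: t).foldr max 0 : ℕ) : ℕ∞)) ∈
          {m : ℕ∞ | ∃ l, IsPath G s l v ∧ (∀ x ∈ l, x < s) ∧ m = (l.foldr max 0 : ℕ)} :=
        ⟨a :: t, hl, fun x hx => (hlt x hx).1, rfl⟩
      have h1 : (a :: t).foldr max 0 < v := by
        have hall : ∀ x ∈ (a :: t), x < v := fun x hx => (hlt x hx).2
        exact foldr_max_lt _ _ (lt_of_le_of_lt (Nat.zero_le a) (hall a (List.mem_cons_self))) hall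
      calc maxId G s v ≤ _ := sInf_le hmem
        _ < (v : ℕ∞) := by exact_mod_cast h1
  · rintro (h | ⟨⟨l, hl, hls⟩, hlt⟩)
    · exact ⟨[], h, by simp⟩
    · unfold maxId at hlt
      rw [sInf_lt_iff] at hlt
      obtain ⟨m, ⟨l', hl', hls', rfl⟩, hmv⟩ := hlt
      refine ⟨l', hl', fun x hx => ⟨hls' x hx, ?_⟩⟩
      have : (l'.foldr max 0 : ℕ) < v := by exact_mod_cast hmv
      exact lt_of_le_of_lt (le_foldr_max l' x hx) this
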